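/- (Generalized Hong–Ou–Mandel output symmetry) Let F = (1/√2)·[[1,1],[1,−1]] and let n̄ be a positive integer. Then for every pair (n₁,n₂) of nonnegative integers with n₁ + n₂ = 2n̄, the 2n̄-boson representation of F satisfies |[B_{2n̄}(F)]_{(n₁,n₂),(n̄,n̄)}| = |[B_{2n̄}(F)]_{(n₂,n₁),(n̄,n̄)}|. -/

import Mathlib

namespace BSF

variable {α : Type*} [Fintype α] [DecidableEq α]

/-- The canonical list in which each index `i` is repeated `ν i` times. -/
noncomputable def repList (ν : α → ℕ) : List α :=
  Finset.univ.toList.flatMap fun i => List.replicate (ν i) i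

set_option linter.unusedSectionVars false in
lemma repList_length (ν : α → ℕ) : (repList ν).length = ∑ i, ν i := by
  simp [repList, List.length_flatMap]

/-- The index set `T(m,n)`: occupation-number tuples with total `n`. -/
def BosonIdx (α : Type*) [Fintype α] (n : ℕ) := {ν : α → ℕ // ∑ i, ν i = n}

instance {n : ℕ} : DecidableEq (BosonIdx α n) :=
  inferInstanceAs (DecidableEq {ν : α → ℕ // ∑ i, ν i = n})

noncomputable instance {n : ℕ} : Fintype (BosonIdx α n) :=
  Fintype.ofInjective
    (fun ν : BosonIdx α n => fun i : α =>
      (⟨ν.1 i, by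
        have h := Finset.single_le_sum (f := ν.1) (fun j _ => Nat.zero_le _) (Finset.mem_univ i)
        rw [ν.2] at h
        omega⟩ : Fin (n + 1)))
    (fun a b hab => Subtype.ext (funext fun i => congrArg Fin.val (congrFun hab i)))

/-- The permanent of a square complex matrix. -/
noncomputable def permanent {n : ℕ} (M : Matrix (Fin n) (Fin n) ℂ) : ℂ :=
  ∑ σ : Equiv.Perm (Fin n), ∏ i, M (σ i) i

/-- The canonical repetition function associated with an occupation tuple. -/
noncomputable def repFun {n : ℕ} (ν : BosonIdx α n) : Fin n → α :=
  fun k => (repList ν.1).get (Fin.cast ((repList_length ν.1).trans ν.2).symm k)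

/-- The `n`-boson representation of a matrix `S`. -/
noncomputable def bosonRep (n : ℕ) (S : Matrix α α ℂ) :
    Matrix (BosonIdx α n) (BosonIdx α n) ℂ :=
  Matrix.of fun ν ν' =>
    permanent (Matrix.of fun k l => S (repFun ν k) (repFun ν' l)) /
      (Real.sqrt ((∏ i, (ν.1 i).factorial * (ν'.1 i).factorial : ℕ) : ℝ) : ℂ)

/-- Relabeling an occupation tuple by (precomposition with) a permutation of the modes. -/
def permIdx {n : ℕ} (σ : Equiv.Perm α) (ν : BosonIdx α n) : BosonIdx α n :=
  ⟨ν.1 ∘ σ, show ∑ i, ν.1 (σ i) = n from (Equiv.sum_comp σ ν.1).trans ν.2⟩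

/- ### Auxiliary lemmas -/

set_option linter.unusedSectionVars false in
lemma card_fiber (l : List α) (a : α) :
    Fintype.card {i : Fin l.length // l.get i = a} = l.count a := by
  classical
  conv_rhs => rw [← List.map_get_finRange l]
  rw [Fintype.card_subtype, List.count_eq_countP, List.countP_map]
  have huniv : (Finset.univ : Finset (Fin l.length)).val = ↑(List.finRange l.length) := rfl
  rw [Finset.card_def, Finset.filter_val, huniv, Multiset.filter_coe,
    Multiset.coe_card, ← List.countP_eq_length_filter]
  apply List.countP_congr
  intro x _
  simp

set_option linter.unusedSectionVars false in
lemma count_repList (ν : α → ℕ) (a : α) : (repList ν).count a = ν a := by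
  classical
  rw [repList, List.count_eq_countP, List.countP_flatMap]
  have h1 : List.map ((List.countP fun x => x == a) ∘ fun i => List.replicate (ν i) i)
      Finset.univ.toList = List.map (fun i => if i = a then ν i else 0) Finset.univ.toList := by
    apply List.map_congr_left
    intro i _
    simp only [Function.comp_apply]
    rcases eq_or_ne i a with rfl | hne
    · rw [← List.count_eq_countP, List.count_replicate]; simp
    · rw [← List.count_eq_countP, List.count_replicate]; simp [hne]
  rw [h1, Finset.sum_map_toList Finset.univ (fun i => if i = a then ν i else 0)]
  simp

set_option linter.unusedSectionVars false in
lemma card_fiber_repFun {n : ℕ} (ν : BosonIdx α n) (a : α) :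
    Fintype.card {k : Fin n // repFun ν k = a} = ν.1 a := by
  classical
  rw [← count_repList ν.1 a, ← card_fiber]
  exact Fintype.card_congr
    (Equiv.subtypeEquiv (finCongr ((repList_length ν.1).trans ν.2).symm) (fun k => Iff.rfl))

set_option linter.unusedSectionVars false in
lemma exists_perm_comp {n : ℕ} (f g : Fin n → α)
    (h : ∀ a, Fintype.card {i // f i = a} = Fintype.card {i // g i = a}) :
    ∃ e : Equiv.Perm (Fin n), f = g ∘ e := by
  classical
  let e : Fin n ≃ Fin n :=
    ((Equiv.sigmaFiberEquiv f).symm.trans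
      (Equiv.sigmaCongrRight fun a => Fintype.equivOfCardEq (h a))).trans
      (Equiv.sigmaFiberEquiv g)
  refine ⟨e, funext fun x => ?_⟩
  show f x = g (e x)
  have : e x = (((Equiv.sigmaCongrRight fun a => Fintype.equivOfCardEq (h a)))
      ((Equiv.sigmaFiberEquiv f).symm x)).2.1 := rfl
  rw [this]
  exact (((Equiv.sigmaCongrRight fun a => Fintype.equivOfCardEq (h a)))
    ((Equiv.sigmaFiberEquiv f).symm x)).2.2.symm

lemma permanent_mul_comp {n : ℕ} (M : Matrix (Fin n) (Fin n) ℂ) (e : Equiv.Perm (Fin n))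
    (c : Fin n → ℂ) :
    permanent (Matrix.of fun k l => c l * M (e k) l) = (∏ l, c l) * permanent M := by
  unfold permanent
  simp only [Matrix.of_apply]
  rw [Finset.mul_sum]
  refine Fintype.sum_bijective (fun σ => e * σ) (Group.mulLeft_bijective e) _ _ fun σ => ?_
  rw [Finset.prod_mul_distrib]
  rfl

/-- Generalized Hong–Ou–Mandel output symmetry. For the 50:50 beam
splitter `F = (1/√2)·[[1,1],[1,−1]]` and input `(n̄, n̄)`, the outputs `(n₁, n₂)` and
`(n₂, n₁)` have entries of equal modulus in the `2n̄`-boson representation of `F`. -/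
theorem hom_output_symmetry (nb : ℕ) (hnb : 0 < nb) (n₁ n₂ : ℕ)
    (h : n₁ + n₂ = 2 * nb) :
    ‖(bosonRep (2 * nb)
      (((Real.sqrt 2 : ℝ) : ℂ)⁻¹ • (!![1, 1; 1, -1] : Matrix (Fin 2) (Fin 2) ℂ))
      ⟨![n₁, n₂], by simpa [Fin.sum_univ_two] using h⟩
      ⟨![nb, nb], by simp [Fin.sum_univ_two]; omega⟩)‖ =
    ‖(bosonRep (2 * nb)
      (((Real.sqrt 2 : ℝ) : ℂ)⁻¹ • (!![1, 1; 1, -1] : Matrix (Fin 2) (Fin 2) ℂ))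
      ⟨![n₂, n₁], by simp [Fin.sum_univ_two]; omega⟩
      ⟨![nb, nb], by simp [Fin.sum_univ_two]; omega⟩)‖ := by
  classical
  set S : Matrix (Fin 2) (Fin 2) ℂ :=
    ((Real.sqrt 2 : ℝ) : ℂ)⁻¹ • (!![1, 1; 1, -1] : Matrix (Fin 2) (Fin 2) ℂ) with hSdef
  set ν₁ : BosonIdx (Fin 2) (2 * nb) := ⟨![n₁, n₂], by simpa [Fin.sum_univ_two] using h⟩
  set ν₂ : BosonIdx (Fin 2) (2 * nb) := ⟨![n₂, n₁], by simp [Fin.sum_univ_two]; omega⟩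
  set μ : BosonIdx (Fin 2) (2 * nb) := ⟨![nb, nb], by simp [Fin.sum_univ_two]; omega⟩
  have hν₁ : ν₁.1 = ![n₁, n₂] := rfl
  have hν₂ : ν₂.1 = ![n₂, n₁] := rfl
  have hμ : μ.1 = ![nb, nb] := rfl
  set f₁ := repFun ν₁
  set f₂ := repFun ν₂
  set g := repFun μ
  -- fibers of swap ∘ f₂ match fibers of f₁
  have hfib : ∀ a : Fin 2,
      Fintype.card {k // (Equiv.swap (0 : Fin 2) 1 ∘ f₂) k = a}
        = Fintype.card {k // f₁ k = a} := by
    intro a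
    have h1 : Fintype.card {k // (Equiv.swap (0 : Fin 2) 1 ∘ f₂) k = a}
        = Fintype.card {k // f₂ k = Equiv.swap (0 : Fin 2) 1 a} := by
      apply Fintype.card_congr
      exact Equiv.subtypeEquiv (Equiv.refl _) fun k => by
        rw [Function.comp_apply, Equiv.swap_apply_eq_iff]; rfl
    rw [h1, card_fiber_repFun, card_fiber_repFun, hν₁, hν₂]
    fin_cases a <;> simp [Equiv.swap_apply_left, Equiv.swap_apply_right]
  obtain ⟨e, he⟩ := exists_perm_comp (Equiv.swap (0 : Fin 2) 1 ∘ f₂) f₁ hfib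
  have hf₂ : ∀ k, f₂ k = Equiv.swap (0 : Fin 2) 1 (f₁ (e k)) := by
    intro k
    have := congrFun he k
    simp only [Function.comp_apply] at this
    rw [← this, Equiv.swap_apply_self]
  -- sign relation for S
  have hS : ∀ i j : Fin 2, S (Equiv.swap (0 : Fin 2) 1 i) j = (-1 : ℂ) ^ (j : ℕ) * S i j := by
    intro i j
    fin_cases i <;> fin_cases j <;>
      simp [hSdef, Matrix.smul_apply, Equiv.swap_apply_left, Equiv.swap_apply_right] <;> ring
  -- matrices
  have hM : (Matrix.of fun k l => S (f₂ k) (g l)) =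
      Matrix.of fun k l => ((-1 : ℂ) ^ ((g l : Fin 2) : ℕ)) *
        (Matrix.of fun k l => S (f₁ k) (g l)) (e k) l := by
    ext k l
    simp only [Matrix.of_apply]
    rw [hf₂ k, hS]
  have hper : permanent (Matrix.of fun k l => S (f₂ k) (g l)) =
      (∏ l, ((-1 : ℂ) ^ ((g l : Fin 2) : ℕ))) *
        permanent (Matrix.of fun k l => S (f₁ k) (g l)) := by
    rw [hM]; exact permanent_mul_comp _ e _
  -- denominators agree
  have hden : (∏ i, (ν₁.1 i).factorial * (μ.1 i).factorial : ℕ)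
      = (∏ i, (ν₂.1 i).factorial * (μ.1 i).factorial : ℕ) := by
    rw [hν₁, hν₂, hμ, Fin.prod_univ_two, Fin.prod_univ_two]
    simp [Matrix.cons_val_zero, Matrix.cons_val_one]
    ring
  -- finish
  show ‖(permanent (Matrix.of fun k l => S (f₁ k) (g l)) /
      (Real.sqrt ((∏ i, (ν₁.1 i).factorial * (μ.1 i).factorial : ℕ) : ℝ) : ℂ))‖
    = ‖(permanent (Matrix.of fun k l => S (f₂ k) (g l)) /
      (Real.sqrt ((∏ i, (ν₂.1 i).factorial * (μ.1 i).factorial : ℕ) : ℝ) : ℂ))‖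
  rw [hper, ← hden, norm_div, norm_div, norm_mul]
  have habs : ‖(∏ l, ((-1 : ℂ) ^ ((g l : Fin 2) : ℕ)))‖ = 1 := by
    rw [norm_prod]
    simp
  rw [habs, one_mul]


end BSF
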